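/- Let q > 3, m ≥ q, and write m - 1 = a(q-1) with a ≥ 3 (i.e., m = a(q-1)+1). Let n = (q^m - 1)/(q-1). Then δ₂ = (q^m - 1 - q^{m-1} - q^{m-a} - Σ_{l=1}^{q-3} q^{a·l - 1})/(q-1) is a q-cyclotomic coset leader modulo n, and its q-cyclotomic coset has exactly m elements. -/

import Mathlib

namespace S12

lemma sum_modEq {n : ℕ} (s : Finset ℕ) (f g : ℕ → ℕ)
    (h : ∀ i ∈ s, f i ≡ g i [MOD n]) :
    ∑ i ∈ s, f i ≡ ∑ i ∈ s, g i [MOD n] := by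
  classical
  induction s using Finset.induction_on with
  | empty => rfl
  | insert x s' hx ih =>
    rw [Finset.sum_insert hx, Finset.sum_insert hx]
    exact (h x (Finset.mem_insert_self _ _)).add
      (ih fun i hi => h i (Finset.mem_insert_of_mem hi))

lemma mod_two {m x : ℕ} (h1 : m ≤ x) (h2 : x < 2*m) : x % m = x - m := by
  rw [Nat.mod_eq_sub_mod h1, Nat.mod_eq_of_lt (by omega)]

lemma pow_mod (q m x : ℕ) (hq : 0 < q) : q ^ x ≡ q ^ (x % m) [MOD q ^ m - 1] := by
  rcases Nat.eq_zero_or_pos m with rfl | hm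
  · simp [Nat.ModEq]
  · have h1 : q ^ m ≡ 1 [MOD q ^ m - 1] :=
      ((Nat.modEq_iff_dvd' (Nat.one_le_pow _ _ hq)).mpr dvd_rfl).symm
    conv_lhs => rw [← Nat.div_add_mod x m]
    rw [pow_add, pow_mul]
    calc (q ^ m) ^ (x / m) * q ^ (x % m)
        ≡ 1 ^ (x / m) * q ^ (x % m) [MOD q ^ m - 1] := ((h1.pow _).mul_right _)
      _ = q ^ (x % m) := by rw [one_pow, one_mul]

/-- the shifted "complement" sum -/
def Pj (q m a j : ℕ) : ℕ :=
  q ^ ((m-1+j) % m) + q ^ ((m-a+j) % m) +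
    ∑ l ∈ Finset.Icc 1 (q-3), q ^ ((a*l-1+j) % m)

lemma Pj_mod (q m a j : ℕ) : Pj q m a j = Pj q m a (j % m) := by
  have h : ∀ s : ℕ, (s + j) % m = (s + j % m) % m :=
    fun s => (Nat.add_mod_mod s j m).symm
  unfold Pj
  simp only [h]

section

variable {q m a : ℕ}

lemma muls (hq : 3 < q) (hma : m = a * (q-1) + 1) :
    a*(q-2) + a = m - 1 ∧ a*(q-3) + 2*a = m - 1 ∧ a*(q-4) + 3*a = m - 1 := by
  have h1 : q - 1 = (q-2) + 1 := by omega
  have h2 : q - 2 = (q-3) + 1 := by omega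
  have h3 : q - 3 = (q-4) + 1 := by omega
  have m1 : a * (q-1) = a*(q-2) + a := by rw [h1, Nat.mul_add, Nat.mul_one]
  have m2 : a * (q-2) = a*(q-3) + a := by rw [h2, Nat.mul_add, Nat.mul_one]
  have m3 : a * (q-3) = a*(q-4) + a := by rw [h3, Nat.mul_add, Nat.mul_one]
  omega

lemma Pj_zero (hq : 3 < q) (ha : 3 ≤ a) (hma : m = a * (q-1) + 1) :
    Pj q m a 0 = q ^ (m-1) + q ^ (m-a) +
      ∑ l ∈ Finset.Icc 1 (q-3), q ^ (a*l-1) := by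
  obtain ⟨e2, e3, e4⟩ := muls hq hma
  have hm : 3*a + 1 ≤ m := by omega
  unfold Pj
  congr 1
  · congr 1
    · congr 1; rw [Nat.add_zero]; exact Nat.mod_eq_of_lt (by omega)
    · congr 1; rw [Nat.add_zero]; exact Nat.mod_eq_of_lt (by omega)
  · apply Finset.sum_congr rfl
    intro l hl
    simp only [Finset.mem_Icc] at hl
    have hA : a * l ≤ a * (q-3) := Nat.mul_le_mul_left a hl.2
    have hA1 : a * 1 ≤ a * l := Nat.mul_le_mul_left a hl.1
    rw [Nat.mul_one] at hA1
    congr 1; rw [Nat.add_zero]; exact Nat.mod_eq_of_lt (by omega)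

lemma card_Icc' (hq : 3 < q) : (Finset.Icc 1 (q-3)).card = q - 3 := by
  rw [Nat.card_Icc]; omega

lemma Pj_lt_Q (hq : 3 < q) (ha : 3 ≤ a) (hma : m = a * (q-1) + 1) (j : ℕ) :
    Pj q m a j < q ^ m - 1 := by
  obtain ⟨e2, e3, e4⟩ := muls hq hma
  have hm : 3*a + 1 ≤ m := by omega
  have hq0 : 0 < q := by omega
  have hb : ∀ x : ℕ, q ^ (x % m) ≤ q ^ (m-1) := fun x =>
    Nat.pow_le_pow_right hq0 (by have := Nat.mod_lt x (show 0 < m by omega); omega)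
  have hsum : ∑ l ∈ Finset.Icc 1 (q-3), q ^ ((a*l-1+j) % m)
      ≤ (q-3) * q ^ (m-1) := by
    calc ∑ l ∈ Finset.Icc 1 (q-3), q ^ ((a*l-1+j) % m)
        ≤ (Finset.Icc 1 (q-3)).card • q ^ (m-1) :=
          Finset.sum_le_card_nsmul _ _ _ (fun x _ => hb _)
      _ = (q-3) * q ^ (m-1) := by rw [card_Icc' hq, smul_eq_mul]
  have h1 : Pj q m a j ≤ (q-1) * q ^ (m-1) := by
    have := hb (m-1+j); have := hb (m-a+j)
    unfold Pj
    have hfac : (q-1) * q ^ (m-1) = q ^ (m-1) + q ^ (m-1) + (q-3) * q ^ (m-1) := by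
      have h : q - 1 = 2 + (q-3) := by omega
      rw [h, Nat.add_mul]; ring
    omega
  have h2 : (q-1) * q ^ (m-1) + q ^ (m-1) = q ^ m := by
    have h' : (q-1+1) * q ^ (m-1) = (q-1) * q ^ (m-1) + q ^ (m-1) := by
      rw [Nat.add_mul, Nat.one_mul]
    have hq1 : q - 1 + 1 = q := by omega
    rw [hq1] at h'
    rw [← h', ← pow_succ']
    congr 1; omega
  have h3 : q ≤ q ^ (m-1) := by
    calc q = q ^ 1 := (pow_one q).symm
      _ ≤ q ^ (m-1) := Nat.pow_le_pow_right hq0 (by omega)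
  omega

lemma Pj_pos (hq : 3 < q) (j : ℕ) : 0 < Pj q m a j := by
  have : 0 < q ^ ((m-1+j) % m) := Nat.pow_pos (by omega)
  unfold Pj; omega

/-- main combinatorial lemma: the unshifted hole-sum is strictly maximal -/
lemma Pj_lt (hq : 3 < q) (ha : 3 ≤ a) (hma : m = a * (q-1) + 1) {j : ℕ}
    (hj : j % m ≠ 0) : Pj q m a j < Pj q m a 0 := by
  obtain ⟨e2, e3, e4⟩ := muls hq hma
  have hm : 3*a + 1 ≤ m := by omega
  have hq0 : 0 < q := by omega
  have hP0 : q ^ (m-1) + q ^ (m-a) ≤ Pj q m a 0 := by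
    rw [Pj_zero hq ha hma]; exact Nat.le_add_right _ _
  have hpowmono : ∀ x y : ℕ, x ≤ y → q ^ x ≤ q ^ y := fun x y h =>
    Nat.pow_le_pow_right hq0 h
  have hgen : ∀ x : ℕ, q ^ (x % m) ≤ q ^ (m-1) := fun x =>
    hpowmono _ _ (by have := Nat.mod_lt x (show 0 < m by omega); omega)
  -- the common final bound
  have hfin : q ^ (m-1) + (q-2) * q ^ (m-1-a) < Pj q m a 0 := by
    have hpow : (q-2) * q ^ (m-1-a) < q ^ (m-a) := by
      have he : q ^ (m-a) = q * q ^ (m-1-a) := by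
        rw [← pow_succ']; congr 1; omega
      rw [he]
      exact Nat.mul_lt_mul_of_lt_of_le (by omega) le_rfl (Nat.pow_pos hq0)
    calc q ^ (m-1) + (q-2) * q ^ (m-1-a) < q ^ (m-1) + q ^ (m-a) := by omega
      _ ≤ Pj q m a 0 := hP0
  rw [Pj_mod]
  set j' := j % m with hj'def
  have hjm : j' < m := Nat.mod_lt _ (by omega)
  have hj1 : 1 ≤ j' := by omega
  by_cases hc1 : j' = a - 1
  · -- case (i)
    have he1 : (m-1+j') % m = a - 2 := by
      rw [hc1, mod_two (by omega) (by omega)]; omega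
    have hsum : ∑ l ∈ Finset.Icc 1 (q-3), q ^ ((a*l-1+j') % m)
        ≤ (q-3) * q ^ (m-1-a) := by
      calc ∑ l ∈ Finset.Icc 1 (q-3), q ^ ((a*l-1+j') % m)
          ≤ (Finset.Icc 1 (q-3)).card • q ^ (m-1-a) := by
            apply Finset.sum_le_card_nsmul
            intro l hl
            simp only [Finset.mem_Icc] at hl
            have hA : a * l ≤ a * (q-3) := Nat.mul_le_mul_left a hl.2
            have hA1 : a * 1 ≤ a * l := Nat.mul_le_mul_left a hl.1
            rw [Nat.mul_one] at hA1
            have hexp : (a*l-1+j') % m = a*l-1 + (a-1) := by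
              rw [hc1]; exact Nat.mod_eq_of_lt (by omega)
            rw [hexp]
            exact hpowmono _ _ (by omega)
        _ = (q-3) * q ^ (m-1-a) := by rw [card_Icc' hq, smul_eq_mul]
    have ht1 : q ^ ((m-1+j') % m) ≤ q ^ (m-1-a) := by
      rw [he1]; exact hpowmono _ _ (by omega)
    have ht2 : q ^ ((m-a+j') % m) ≤ q ^ (m-1) := hgen _
    calc Pj q m a j' ≤ q ^ (m-1) + (q-2) * q ^ (m-1-a) := by
          unfold Pj
          have hfac : (q-2) * q ^ (m-1-a)
              = q ^ (m-1-a) + (q-3) * q ^ (m-1-a) := by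
            have h : q - 2 = 1 + (q-3) := by omega
            rw [h, Nat.add_mul]; ring
          omega
      _ < Pj q m a 0 := hfin
  · by_cases hc2 : ∃ l₀ ∈ Finset.Icc 1 (q-3), j' = m - a*l₀
    · -- case (ii)
      obtain ⟨l₀, hl₀mem, hj'eq⟩ := hc2
      simp only [Finset.mem_Icc] at hl₀mem
      have hB : a * l₀ ≤ a * (q-3) := Nat.mul_le_mul_left a hl₀mem.2
      have hB1 : a * 1 ≤ a * l₀ := Nat.mul_le_mul_left a hl₀mem.1
      rw [Nat.mul_one] at hB1
      set B := a * l₀ with hBdef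
      have ht1 : q ^ ((m-1+j') % m) ≤ q ^ (m-1-a) := by
        rw [hj'eq, mod_two (by omega) (by omega)]
        exact hpowmono _ _ (by omega)
      have ht2 : q ^ ((m-a+j') % m) ≤ q ^ (m-1-a) := by
        rw [hj'eq, mod_two (by omega) (by omega)]
        exact hpowmono _ _ (by omega)
      have hsum : ∑ l ∈ Finset.Icc 1 (q-3), q ^ ((a*l-1+j') % m)
          ≤ q ^ (m-1) + (q-4) * q ^ (m-1-a) := by
        have hmem : l₀ ∈ Finset.Icc 1 (q-3) := Finset.mem_Icc.mpr hl₀mem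
        rw [← Finset.sum_erase_add _ _ hmem]
        have hrest : ∑ l ∈ (Finset.Icc 1 (q-3)).erase l₀, q ^ ((a*l-1+j') % m)
            ≤ (q-4) * q ^ (m-1-a) := by
          calc ∑ l ∈ (Finset.Icc 1 (q-3)).erase l₀, q ^ ((a*l-1+j') % m)
              ≤ ((Finset.Icc 1 (q-3)).erase l₀).card • q ^ (m-1-a) := by
                apply Finset.sum_le_card_nsmul
                intro l hl
                have hlne : l ≠ l₀ := Finset.ne_of_mem_erase hl
                have hl' := Finset.mem_of_mem_erase hl
                simp only [Finset.mem_Icc] at hl'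
                have hA : a * l ≤ a * (q-3) := Nat.mul_le_mul_left a hl'.2
                have hA1 : a * 1 ≤ a * l := Nat.mul_le_mul_left a hl'.1
                rw [Nat.mul_one] at hA1
                rcases Nat.lt_or_ge l l₀ with hlt | hge
                · -- l < l₀ : exponent = a*l-1 + (m-B) < m
                  have hAB : a * l + a ≤ B := by
                    have := Nat.mul_le_mul_left a (show l + 1 ≤ l₀ by omega)
                    rw [Nat.mul_add, Nat.mul_one] at this
                    exact this
                  have hexp : (a*l-1+j') % m = a*l-1 + (m - B) := by
                    rw [hj'eq]; exact Nat.mod_eq_of_lt (by omega)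
                  rw [hexp]
                  exact hpowmono _ _ (by omega)
                · -- l₀ < l
                  have hgt : l₀ < l := by omega
                  obtain ⟨d, hd⟩ : ∃ d, l = l₀ + d := ⟨l - l₀, by omega⟩
                  have hd1 : 1 ≤ d := by omega
                  have hACB : a * l = B + a * d := by rw [hd, Nat.mul_add]
                  have hC1 : a * 1 ≤ a * d := Nat.mul_le_mul_left a hd1
                  rw [Nat.mul_one] at hC1
                  have hC2 : a * d ≤ a * (q-4) :=
                    Nat.mul_le_mul_left a (by omega)
                  have hexp : (a*l-1+j') % m = a * d - 1 := by
                    rw [hj'eq, mod_two (by omega) (by omega)]; omega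
                  rw [hexp]
                  exact hpowmono _ _ (by omega)
            _ = (q-4) * q ^ (m-1-a) := by
                rw [Finset.card_erase_of_mem hmem, card_Icc' hq, smul_eq_mul]
                congr 1
                try omega
        have hl₀term : q ^ ((a*l₀-1+j') % m) ≤ q ^ (m-1) := hgen _
        omega
      calc Pj q m a j' ≤ q ^ (m-1) + (q-2) * q ^ (m-1-a) := by
            unfold Pj
            have hfac : (q-2) * q ^ (m-1-a)
                = q ^ (m-1-a) + q ^ (m-1-a) + (q-4) * q ^ (m-1-a) := by
              have h : q - 2 = 2 + (q-4) := by omega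
              rw [h, Nat.add_mul]; ring
            omega
        _ < Pj q m a 0 := hfin
    · -- case (iii): no hole is shifted to the top
      push_neg at hc2
      have ht1 : q ^ ((m-1+j') % m) ≤ q ^ (m-2) := by
        rw [mod_two (by omega) (by omega)]
        exact hpowmono _ _ (by omega)
      have ht2 : q ^ ((m-a+j') % m) ≤ q ^ (m-2) := by
        apply hpowmono
        rcases Nat.lt_or_ge (m-a+j') m with hlt | hge
        · rw [Nat.mod_eq_of_lt hlt]; omega
        · rw [mod_two hge (by omega)]; omega
      have hsum : ∑ l ∈ Finset.Icc 1 (q-3), q ^ ((a*l-1+j') % m)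
          ≤ (q-3) * q ^ (m-2) := by
        calc ∑ l ∈ Finset.Icc 1 (q-3), q ^ ((a*l-1+j') % m)
            ≤ (Finset.Icc 1 (q-3)).card • q ^ (m-2) := by
              apply Finset.sum_le_card_nsmul
              intro l hl
              have hl' := hl
              simp only [Finset.mem_Icc] at hl'
              have hA : a * l ≤ a * (q-3) := Nat.mul_le_mul_left a hl'.2
              have hA1 : a * 1 ≤ a * l := Nat.mul_le_mul_left a hl'.1
              rw [Nat.mul_one] at hA1
              have hne := hc2 l hl
              apply hpowmono
              rcases Nat.lt_or_ge (a*l-1+j') m with hlt | hge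
              · rw [Nat.mod_eq_of_lt hlt]; omega
              · rw [mod_two hge (by omega)]; omega
          _ = (q-3) * q ^ (m-2) := by rw [card_Icc' hq, smul_eq_mul]
      have hlast : (q-1) * q ^ (m-2) < q ^ (m-1) := by
        have he : q ^ (m-1) = q * q ^ (m-2) := by
          rw [← pow_succ']; congr 1; omega
        rw [he]
        exact Nat.mul_lt_mul_of_lt_of_le (by omega) le_rfl (Nat.pow_pos hq0)
      have hfac : (q-1) * q ^ (m-2) = q ^ (m-2) + q ^ (m-2) + (q-3) * q ^ (m-2) := by
        have h : q - 1 = 2 + (q-3) := by omega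
        rw [h, Nat.add_mul]; ring
      have : Pj q m a j' ≤ (q-1) * q ^ (m-2) := by unfold Pj; omega
      calc Pj q m a j' ≤ (q-1) * q ^ (m-2) := this
        _ < q ^ (m-1) := hlast
        _ ≤ Pj q m a 0 := le_trans (Nat.le_add_right _ _) hP0


lemma Pj_mul (hq0 : 0 < q) (j t : ℕ) :
    Pj q m a j * q ^ t ≡ Pj q m a (j + t) [MOD q ^ m - 1] := by
  unfold Pj
  rw [Nat.add_mul, Nat.add_mul, Finset.sum_mul]
  have key : ∀ s : ℕ,
      q ^ ((s + j) % m) * q ^ t ≡ q ^ ((s + (j + t)) % m) [MOD q ^ m - 1] := by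
    intro s
    rw [← pow_add]
    calc q ^ ((s+j) % m + t)
        ≡ q ^ (((s+j) % m + t) % m) [MOD q ^ m - 1] := pow_mod q m _ hq0
      _ = q ^ ((s + (j+t)) % m) := by rw [Nat.mod_add_mod, Nat.add_assoc]
  exact ((key (m-1)).add (key (m-a))).add
    (sum_modEq _ _ _ (fun l _ => key (a*l-1)))

lemma N_shift (hq : 3 < q) (ha : 3 ≤ a) (hma : m = a * (q-1) + 1) (i t : ℕ) :
    (q ^ m - 1 - Pj q m a i) * q ^ t % (q ^ m - 1)
      = q ^ m - 1 - Pj q m a (i + t) := by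
  have hq0 : 0 < q := by omega
  have hQpos : 0 < q ^ m - 1 := by
    have : q ^ 1 ≤ q ^ m := Nat.pow_le_pow_right hq0 (by
      obtain ⟨e2, e3, e4⟩ := muls hq hma; omega)
    simp only [pow_one] at this; omega
  have hle : Pj q m a i ≤ q ^ m - 1 := (Pj_lt_Q hq ha hma i).le
  have hpos := Pj_pos (m := m) (a := a) hq (i+t)
  have hlt := Pj_lt_Q hq ha hma (i+t)
  have h1 : (q ^ m - 1 - Pj q m a i) * q ^ t + Pj q m a i * q ^ t
      = (q ^ m - 1) * q ^ t := by
    rw [← Nat.add_mul, Nat.sub_add_cancel hle]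
  have h2 : (q ^ m - 1 - Pj q m a i) * q ^ t + Pj q m a (i+t)
      ≡ (q ^ m - 1 - Pj q m a (i+t)) + Pj q m a (i+t) [MOD q ^ m - 1] := by
    calc (q ^ m - 1 - Pj q m a i) * q ^ t + Pj q m a (i+t)
        ≡ (q ^ m - 1 - Pj q m a i) * q ^ t + Pj q m a i * q ^ t [MOD q ^ m - 1] :=
          (Nat.ModEq.refl _).add (Pj_mul hq0 i t).symm
      _ = (q ^ m - 1) * q ^ t := h1
      _ ≡ 0 * q ^ t [MOD q ^ m - 1] :=
          (Nat.ModEq.mul_right _ (Nat.modEq_zero_iff_dvd.mpr dvd_rfl))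
      _ = 0 := by ring
      _ ≡ (q ^ m - 1 - Pj q m a (i+t)) + Pj q m a (i+t) [MOD q ^ m - 1] := by
          rw [Nat.sub_add_cancel hlt.le]
          exact (Nat.modEq_zero_iff_dvd.mpr dvd_rfl).symm
  have h3 : (q ^ m - 1 - Pj q m a i) * q ^ t
      ≡ q ^ m - 1 - Pj q m a (i+t) [MOD q ^ m - 1] :=
    h2.add_right_cancel' _
  calc (q ^ m - 1 - Pj q m a i) * q ^ t % (q ^ m - 1)
      = (q ^ m - 1 - Pj q m a (i+t)) % (q ^ m - 1) := h3
    _ = q ^ m - 1 - Pj q m a (i+t) := Nat.mod_eq_of_lt (by omega)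

lemma pow_modEq_one (hq0 : 1 ≤ q) (e : ℕ) : q ^ e ≡ 1 [MOD q - 1] := by
  calc q ^ e ≡ 1 ^ e [MOD q - 1] :=
        Nat.ModEq.pow e (((Nat.modEq_iff_dvd' hq0).mpr dvd_rfl).symm)
    _ = 1 := one_pow e

lemma dvd_Pj (hq : 3 < q) (j : ℕ) : (q - 1) ∣ Pj q m a j := by
  have h1 : ∀ e : ℕ, q ^ e ≡ 1 [MOD q - 1] := pow_modEq_one (by omega)
  have h2 : Pj q m a j ≡ 1 + 1 + ∑ _l ∈ Finset.Icc 1 (q-3), 1 [MOD q - 1] := by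
    unfold Pj
    exact ((h1 _).add (h1 _)).add (sum_modEq _ _ _ fun l _ => h1 _)
  have hs : (1 + 1 + ∑ _l ∈ Finset.Icc 1 (q-3), (1:ℕ)) = q - 1 := by
    rw [Finset.sum_const, card_Icc' hq, smul_eq_mul, Nat.mul_one]; omega
  rw [hs] at h2
  exact Nat.modEq_zero_iff_dvd.mp
    (h2.trans (Nat.modEq_zero_iff_dvd.mpr dvd_rfl))

lemma dvd_Q (hq0 : 1 ≤ q) : (q - 1) ∣ q ^ m - 1 :=
  (Nat.modEq_iff_dvd' (Nat.one_le_pow _ _ hq0)).mp (pow_modEq_one hq0 m).symm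

lemma inj_aux (hq : 3 < q) (ha : 3 ≤ a) (hma : m = a * (q-1) + 1) {j k : ℕ}
    (hjk : j < k) (hk : k < m) (h : Pj q m a j = Pj q m a k) : False := by
  have h1 := N_shift hq ha hma j (m - k)
  have h2 := N_shift hq ha hma k (m - k)
  rw [h] at h1
  have h3 : q ^ m - 1 - Pj q m a (j + (m-k))
      = q ^ m - 1 - Pj q m a (k + (m-k)) := h1.symm.trans h2
  have hb1 := Pj_lt_Q hq ha hma (j + (m-k))
  have hb2 := Pj_lt_Q hq ha hma (k + (m-k))
  have h4 : Pj q m a (j + (m-k)) = Pj q m a (k + (m-k)) := by omega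
  have hk' : k + (m-k) = m := by omega
  rw [hk'] at h4
  have hm0 : Pj q m a m = Pj q m a 0 := by
    rw [Pj_mod]; rw [Nat.mod_self]
  have hd : (j + (m-k)) % m = j + (m-k) := Nat.mod_eq_of_lt (by omega)
  have hlt := Pj_lt hq ha hma (j := j + (m-k)) (by rw [hd]; omega)
  omega

end

end S12

theorem stmt_12 (q m a : ℕ) (hq : 3 < q) (hm : q ≤ m)
    (ha : 3 ≤ a) (hma : m = a * (q - 1) + 1) :
    (∀ j : ℕ,
      (q ^ m - 1 - q ^ (m - 1) - q ^ (m - a) - ∑ l ∈ Finset.Icc 1 (q - 3), q ^ (a * l - 1))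
          / (q - 1)
        ≤ ((q ^ m - 1 - q ^ (m - 1) - q ^ (m - a)
              - ∑ l ∈ Finset.Icc 1 (q - 3), q ^ (a * l - 1)) / (q - 1))
            * q ^ j % ((q ^ m - 1) / (q - 1))) ∧
    (Finset.image
      (fun j : ℕ =>
        ((q ^ m - 1 - q ^ (m - 1) - q ^ (m - a)
            - ∑ l ∈ Finset.Icc 1 (q - 3), q ^ (a * l - 1)) / (q - 1))
          * q ^ j % ((q ^ m - 1) / (q - 1)))
      (Finset.range m)).card = m := by
  have hq0 : 0 < q := by omega
  obtain ⟨e2, e3, e4⟩ := S12.muls hq hma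
  have hm3 : 3*a + 1 ≤ m := by omega
  have hnum : q ^ m - 1 - q ^ (m - 1) - q ^ (m - a)
      - ∑ l ∈ Finset.Icc 1 (q - 3), q ^ (a * l - 1)
      = q ^ m - 1 - S12.Pj q m a 0 := by
    rw [S12.Pj_zero hq ha hma]; omega
  rw [hnum]
  have hDQ : (q - 1) ∣ q ^ m - 1 := S12.dvd_Q (by omega)
  have hDN : (q - 1) ∣ q ^ m - 1 - S12.Pj q m a 0 :=
    Nat.dvd_sub hDQ (S12.dvd_Pj hq 0)
  have hQn : (q - 1) * ((q ^ m - 1) / (q - 1)) = q ^ m - 1 :=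
    Nat.mul_div_cancel' hDQ
  have hNδ : (q - 1) * ((q ^ m - 1 - S12.Pj q m a 0) / (q - 1))
      = q ^ m - 1 - S12.Pj q m a 0 :=
    Nat.mul_div_cancel' hDN
  have hDpos : 0 < q - 1 := by omega
  have key : ∀ j : ℕ,
      (q - 1) * ((q ^ m - 1 - S12.Pj q m a 0) / (q - 1) * q ^ j
        % ((q ^ m - 1) / (q - 1)))
      = q ^ m - 1 - S12.Pj q m a j := by
    intro j
    calc (q - 1) * ((q ^ m - 1 - S12.Pj q m a 0) / (q - 1) * q ^ j
          % ((q ^ m - 1) / (q - 1)))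
        = (q - 1) * ((q ^ m - 1 - S12.Pj q m a 0) / (q - 1) * q ^ j)
            % ((q - 1) * ((q ^ m - 1) / (q - 1))) :=
          (Nat.mul_mod_mul_left _ _ _).symm
      _ = (q ^ m - 1 - S12.Pj q m a 0) * q ^ j % (q ^ m - 1) := by
          rw [← Nat.mul_assoc, hNδ, hQn]
      _ = q ^ m - 1 - S12.Pj q m a (0 + j) := S12.N_shift hq ha hma 0 j
      _ = q ^ m - 1 - S12.Pj q m a j := by rw [Nat.zero_add]
  constructor
  · intro j
    have h1 : (q - 1) * ((q ^ m - 1 - S12.Pj q m a 0) / (q - 1))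
        ≤ (q - 1) * ((q ^ m - 1 - S12.Pj q m a 0) / (q - 1) * q ^ j
            % ((q ^ m - 1) / (q - 1))) := by
      rw [key j, hNδ]
      apply Nat.sub_le_sub_left
      rcases Nat.eq_zero_or_pos (j % m) with h | h
      · rw [S12.Pj_mod q m a j, h]
      · exact (S12.Pj_lt hq ha hma (by omega)).le
    exact Nat.le_of_mul_le_mul_left h1 hDpos
  · rw [Finset.card_image_of_injOn, Finset.card_range]
    intro j hj k hk hjk
    simp only [Finset.coe_range, Set.mem_Iio] at hj hk
    have hPjk : S12.Pj q m a j = S12.Pj q m a k := by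
      simp only at hjk
      have h1 := key j
      have h2 := key k
      rw [hjk] at h1
      have h3 : q ^ m - 1 - S12.Pj q m a j = q ^ m - 1 - S12.Pj q m a k :=
        h1.symm.trans h2
      have hb1 := S12.Pj_lt_Q hq ha hma j
      have hb2 := S12.Pj_lt_Q hq ha hma k
      omega
    rcases lt_trichotomy j k with h | h | h
    · exact absurd (S12.inj_aux hq ha hma h hk hPjk) (not_false)
    · exact h
    · exact absurd (S12.inj_aux hq ha hma h hj hPjk.symm) (not_false)
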